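/- Let a_q be a fixed vertex and consider, inside a chain complex whose degree-d group is free on multisets of edges and loops with boundary as in the multiset chain complex construction, the subcomplex W spanned by generators σ in which a_q fails condition (I) (i.e., the loop a_qa_q appears in σ, or deg_σ(a_q) ≤ λ_{a_q} − 2). Then W has vanishing homology: every cycle c ∈ W, decomposed as c = a_qa_q ⊗ c' + c'' with no loop a_qa_q occurring in c' or c'', satisfies ∂c' = 0 and c' = −∂c'', whence c = ∂(a_qa_q ⊗ c'') is a boundary in W. -/

import Mathlib

open scoped Classical

noncomputable section

variable {V : Type*} [LinearOrder V]

/-- The chain group in "size" `s`: the free `R`-module on the multisets of size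
`s` belonging to the family `Δ`. -/
abbrev multisetChains (R : Type*) [CommRing R] (Δ : Set (Multiset V)) (s : ℕ) : Type _ :=
  {σ : Multiset V // σ ∈ Δ ∧ Multiset.card σ = s} →₀ R

/-- The generator of `multisetChains` corresponding to `τ` (zero if `τ ∉ Δ`). -/
def multisetGen (R : Type*) [CommRing R] (Δ : Set (Multiset V)) (s : ℕ)
    (τ : Multiset V) (c : R) : multisetChains R Δ s :=
  if h : τ ∈ Δ ∧ Multiset.card τ = s then Finsupp.single ⟨τ, h⟩ c else 0

/-- One term of the boundary of the multiset chain complex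
`C((Δ,E);R)`, with sign `(-1)^{d - ηᵢ}`. -/
def boundaryStep (R : Type*) [CommRing R] (Δ : Set (Multiset V)) (E : Set (Sym2 V))
    (s : ℕ) (σ : Multiset V) (x : V) (i : ℕ) : multisetChains R Δ s :=
  multisetGen R Δ s (σ.erase x)
    ((-1 : R) ^ (s - ((σ.sort (· ≤ ·)).drop (i + 1)).countP
      (fun y => decide (s(x, y) ∉ E))))

/-- The boundary of the generator corresponding to a multiset of size `s + 1`. -/
def boundaryGen (R : Type*) [CommRing R] (Δ : Set (Multiset V)) (E : Set (Sym2 V))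
    (s : ℕ) (σ : {σ : Multiset V // σ ∈ Δ ∧ Multiset.card σ = s + 1}) :
    multisetChains R Δ s :=
  ∑ i : Fin (s + 1),
    boundaryStep R Δ E s σ.1
      ((σ.1.sort (· ≤ ·)).get ⟨i.1, by rw [Multiset.length_sort, σ.2.2]; exact i.2⟩) i.1

/-- The boundary operator of the multiset chain complex `C((Δ,E);R)`. -/
def multisetBoundary (R : Type*) [CommRing R] (Δ : Set (Multiset V)) (E : Set (Sym2 V))
    (s : ℕ) : multisetChains R Δ (s + 1) →ₗ[R] multisetChains R Δ s :=
  Finsupp.lsum R fun σ =>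
    LinearMap.toSpanSingleton R (multisetChains R Δ s) (boundaryGen R Δ E s σ)

end

noncomputable section

variable (r : ℕ)

/-- An auxiliary linear order on the edges and loops on `Fin r`. -/
instance sym2LinearOrder : LinearOrder (Sym2 (Fin r)) :=
  LinearOrder.lift' (fun e => ((Fintype.equivFin (Sym2 (Fin r))) e : ℕ))
    (fun a b h => (Fintype.equivFin (Sym2 (Fin r))).injective (Fin.val_injective h))

/-- The degree of the vertex `a` in a multiset of edges and loops. -/
def multidegree (σ : Multiset (Sym2 (Fin r))) (a : Fin r) : ℕ :=
  (σ.map (fun e => if e = s(a, a) then 2 else if a ∈ e then 1 else 0)).sum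

/-- The family `Δ_{λ,s}` of admissible multisets of edges and loops. -/
def deltaFamily (lam : Fin r → ℕ) (ss : Fin r → Bool) :
    Set (Multiset (Sym2 (Fin r))) :=
  {σ | (∀ a : Fin r, ss a = true → multidegree r σ a ≤ lam a) ∧
       (∀ a : Fin r, ss a = false →
          lam a - 1 ≤ multidegree r σ a ∧ multidegree r σ a ≤ lam a ∧ s(a, a) ∉ σ) ∧
       (∀ e : Sym2 (Fin r), 2 ≤ σ.count e → ∃ a b : Fin r, e = s(a, b) ∧ ss a ≠ ss b)}

/-- The commutation relation `E_{λ,s}`: two edges commute iff neither is a loop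
and their intersection contains exactly one negatively charged vertex. -/
def commuteFamily (ss : Fin r → Bool) : Set (Sym2 (Sym2 (Fin r))) :=
  {q | ∃ e f : Sym2 (Fin r), q = s(e, f) ∧ ¬ e.IsDiag ∧ ¬ f.IsDiag ∧
        (∃! a : Fin r, a ∈ e ∧ a ∈ f ∧ ss a = false)}

end

/-! ### Auxiliary machinery -/

noncomputable section AuxSec

open scoped Classical

variable {V : Type*} [LinearOrder V] (R : Type*) [CommRing R]
  (Δ : Set (Multiset V)) (E : Set (Sym2 V)) (e₀ : V)

/-- Number of elements smaller than `e₀`. -/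
def pcnt (μ : Multiset V) : ℕ := Multiset.countP (fun y => y < e₀) μ

/-- The boundary sum, written as a recursion over the sorted list, carrying the
already-traversed prefix as a multiset `μ`. -/
def auxB (s : ℕ) : List V → Multiset V → multisetChains R Δ s
  | [], _ => 0
  | x :: L, μ =>
      multisetGen R Δ s (μ + ↑L)
          ((-1 : R) ^ (s - L.countP (fun y => decide (s(x, y) ∉ E)))) +
        auxB s L (x ::ₘ μ)

/-- The terms of the boundary of `e₀ ::ₘ (μ + l)` that do not erase `e₀`. -/
def auxC (s : ℕ) : List V → Multiset V → multisetChains R Δ s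
  | [], _ => 0
  | x :: L, μ =>
      if e₀ ≤ x then auxB R Δ E s (x :: L) (e₀ ::ₘ μ)
      else
        multisetGen R Δ s ((e₀ ::ₘ μ) + ↑L)
            ((-1 : R) ^ (s - (L.countP (fun y => decide (s(x, y) ∉ E)) + 1))) +
          auxC s L (x ::ₘ μ)

/-- The cone (contracting homotopy) map: a generator `σ` not containing `e₀`
is sent to `±(e₀ ::ₘ σ)`, a generator containing `e₀` is sent to `0`. -/
def coneMap (s : ℕ) : multisetChains R Δ s →ₗ[R] multisetChains R Δ (s + 1) :=
  Finsupp.lsum R fun σ =>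
    LinearMap.toSpanSingleton R _
      (if e₀ ∈ σ.1 then 0
       else ((-1 : R) ^ pcnt e₀ σ.1) • multisetGen R Δ (s + 1) (e₀ ::ₘ σ.1) 1)

lemma auxB_cons (s : ℕ) (x : V) (L : List V) (μ : Multiset V) :
    auxB R Δ E s (x :: L) μ =
      multisetGen R Δ s (μ + ↑L)
          ((-1 : R) ^ (s - L.countP (fun y => decide (s(x, y) ∉ E)))) +
        auxB R Δ E s L (x ::ₘ μ) := rfl

lemma smul_gen (s : ℕ) (τ : Multiset V) (a c : R) :
    a • multisetGen R Δ s τ c = multisetGen R Δ s τ (a * c) := by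
  unfold multisetGen; split <;> simp [Finsupp.smul_single]

lemma gen_eq_zero (s : ℕ) (τ : Multiset V) (c : R)
    (h : ¬(τ ∈ Δ ∧ Multiset.card τ = s)) : multisetGen R Δ s τ c = 0 := by
  unfold multisetGen; rw [dif_neg h]

lemma boundary_gen_apply (s : ℕ) (τ : Multiset V) (c : R) :
    multisetBoundary R Δ E s (multisetGen R Δ (s + 1) τ c) =
      if h : τ ∈ Δ ∧ Multiset.card τ = s + 1 then c • boundaryGen R Δ E s ⟨τ, h⟩
      else 0 := by
  unfold multisetGen
  split
  · simp [multisetBoundary, Finsupp.lsum_single, LinearMap.toSpanSingleton_apply]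
  · exact map_zero _

lemma cone_gen_apply (hcl : ∀ ρ : Multiset V, e₀ ::ₘ ρ ∈ Δ → ρ ∈ Δ)
    (s : ℕ) (τ : Multiset V) (c : R) :
    coneMap R Δ e₀ s (multisetGen R Δ s τ c) =
      if e₀ ∈ τ then 0
      else c • (((-1 : R) ^ pcnt e₀ τ) • multisetGen R Δ (s + 1) (e₀ ::ₘ τ) 1) := by
  by_cases h : τ ∈ Δ ∧ Multiset.card τ = s
  · rw [multisetGen, dif_pos h, coneMap, Finsupp.lsum_single, LinearMap.toSpanSingleton_apply]
    split <;> simp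
  · rw [gen_eq_zero _ _ _ _ _ h, map_zero]
    split
    · rfl
    · rw [gen_eq_zero, smul_zero, smul_zero]
      rintro ⟨h1, h2⟩
      exact h ⟨hcl τ h1, by simpa using h2⟩


lemma auxB_sum (s : ℕ) : ∀ (l : List V) (μ : Multiset V),
    (∑ i : Fin l.length, multisetGen R Δ s ((μ + ↑l).erase (l.get i))
      ((-1 : R) ^ (s - ((l.drop (i.1 + 1)).countP (fun y => decide (s(l.get i, y) ∉ E)))))) =
      auxB R Δ E s l μ
  | [], μ => by simp [auxB]
  | x :: L, μ => by
    simp only [List.length_cons]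
    rw [Fin.sum_univ_succ, auxB]
    congr 1
    · congr 1
      rw [List.get_cons_zero, ← Multiset.cons_coe, add_comm μ, Multiset.cons_add,
        Multiset.erase_cons_head, add_comm]
    · rw [← auxB_sum s L (x ::ₘ μ)]
      apply Finset.sum_congr rfl
      intro i _
      congr 2
      rw [← Multiset.cons_coe, add_comm μ, Multiset.cons_add, Multiset.cons_add,
        ← Multiset.add_cons, add_comm, Multiset.cons_add]

lemma boundaryGen_eq_auxB (s : ℕ) (σ : Multiset V) (h : σ ∈ Δ ∧ Multiset.card σ = s + 1) :
    boundaryGen R Δ E s ⟨σ, h⟩ = auxB R Δ E s (σ.sort (· ≤ ·)) 0 := by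
  have hl : (σ.sort (· ≤ ·)).length = s + 1 := by rw [Multiset.length_sort, h.2]
  rw [← auxB_sum R Δ E s (σ.sort (· ≤ ·)) 0, boundaryGen]
  refine (Fintype.sum_equiv (finCongr hl) _ _ ?_).symm
  intro i
  unfold boundaryStep
  congr 2
  all_goals rw [zero_add, Multiset.sort_eq]


lemma coe_orderedInsert (a : V) (l : List V) :
    ((List.orderedInsert (· ≤ ·) a l : List V) : Multiset V) = a ::ₘ (l : Multiset V) := by
  rw [Multiset.cons_coe, Multiset.coe_eq_coe]
  exact l.perm_orderedInsert (· ≤ ·) a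

lemma sort_cons_eq (a : V) (σ : Multiset V) :
    (a ::ₘ σ).sort (· ≤ ·) = List.orderedInsert (· ≤ ·) a (σ.sort (· ≤ ·)) := by
  refine List.Perm.eq_of_pairwise' (Multiset.pairwise_sort _ _)
    ((Multiset.pairwise_sort σ _).orderedInsert a _) ?_
  rw [← Multiset.coe_eq_coe, Multiset.sort_eq, coe_orderedInsert, Multiset.sort_eq]

lemma countP_orderedInsert_list (p : V → Bool) (a : V) (l : List V) :
    (List.orderedInsert (· ≤ ·) a l).countP p = (a :: l).countP p :=
  (l.perm_orderedInsert (· ≤ ·) a).countP_eq p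


lemma claimA (hnc1 : ∀ y, s(e₀, y) ∉ E) (hnc2 : ∀ y, s(y, e₀) ∉ E) (n : ℕ)
    (l : List V) : ∀ (μ : Multiset V), l.Pairwise (· ≤ ·) →
      Multiset.card μ + l.length = n →
      auxB R Δ E n (List.orderedInsert (· ≤ ·) e₀ l) μ =
        ((-1 : R) ^ (Multiset.card μ + pcnt e₀ (↑l : Multiset V))) •
            multisetGen R Δ n (μ + ↑l) 1 +
          auxC R Δ E e₀ n l μ := by
  induction l with
  | nil =>
    intro μ _ hcard
    simp only [List.orderedInsert, auxB, auxC, List.countP_nil, Multiset.coe_nil,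
      Nat.sub_zero, add_zero, pcnt, Multiset.countP_zero]
    rw [smul_gen, mul_one]
    simp only [List.length_nil, add_zero] at hcard
    rw [hcard]
  | cons b L ih =>
    intro μ hsort hcard
    by_cases hb : e₀ ≤ b
    · have hOI : List.orderedInsert (· ≤ ·) e₀ (b :: L) = e₀ :: b :: L := by
        simp [List.orderedInsert, hb]
      rw [hOI]
      simp only [auxB, auxC]
      rw [if_pos hb]
      congr 1
      have hcnt : (b :: L).countP (fun y => decide (s(e₀, y) ∉ E)) = (b :: L).length :=
        List.countP_eq_length.mpr (fun y _ => decide_eq_true (hnc1 y))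
      have hp : pcnt e₀ (↑(b :: L) : Multiset V) = 0 := by
        rw [pcnt, Multiset.countP_eq_zero]
        intro y hy
        have hby : b ≤ y := by
          rcases List.mem_cons.mp (by exact_mod_cast hy) with rfl | hy'
          · exact le_rfl
          · exact List.rel_of_pairwise_cons hsort hy'
        exact not_lt.mpr (hb.trans hby)
      rw [smul_gen, mul_one, hcnt, hp]
      congr 2
      simp only [List.length_cons] at hcard ⊢
      omega
    · have hb' : b < e₀ := not_le.mp hb
      have hOI : List.orderedInsert (· ≤ ·) e₀ (b :: L) =
          b :: List.orderedInsert (· ≤ ·) e₀ L := by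
        simp [List.orderedInsert, hb]
      rw [hOI]
      simp only [auxB]
      rw [ih (b ::ₘ μ) (List.pairwise_cons.mp hsort).2
        (by simp only [Multiset.card_cons, List.length_cons] at hcard ⊢; omega)]
      have hcnt : (List.orderedInsert (· ≤ ·) e₀ L).countP
            (fun y => decide (s(b, y) ∉ E)) =
          L.countP (fun y => decide (s(b, y) ∉ E)) + 1 := by
        rw [countP_orderedInsert_list, List.countP_cons]
        simp [hnc2 b]
      have hμ1 : μ + (↑(List.orderedInsert (· ≤ ·) e₀ L) : Multiset V) =
          (e₀ ::ₘ μ) + ↑L := by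
        rw [coe_orderedInsert, Multiset.add_cons, Multiset.cons_add]
      have hμ2 : (b ::ₘ μ) + (↑L : Multiset V) = μ + ↑(b :: L) := by
        rw [← Multiset.cons_coe, Multiset.add_cons, Multiset.cons_add]
      have hp : pcnt e₀ (↑(b :: L) : Multiset V) = pcnt e₀ (↑L : Multiset V) + 1 := by
        rw [← Multiset.cons_coe, pcnt, pcnt, Multiset.countP_cons, if_pos hb']
      simp only [auxC]
      rw [if_neg hb, hcnt, hμ1, hμ2, hp, Multiset.card_cons]
      have he : Multiset.card μ + 1 + pcnt e₀ (↑L : Multiset V) =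
          Multiset.card μ + (pcnt e₀ (↑L : Multiset V) + 1) := by omega
      rw [he]
      abel


lemma neg_one_pow_congr_mod2 {a b : ℕ} (h : a % 2 = b % 2) : ((-1 : R)) ^ a = (-1) ^ b := by
  rcases Nat.even_or_odd a with ha | ha
  · have hb : Even b := Nat.even_iff.mpr (by rw [← h]; exact Nat.even_iff.mp ha)
    rw [Even.neg_one_pow ha, Even.neg_one_pow hb]
  · have hb : Odd b := Nat.odd_iff.mpr (by rw [← h]; exact Nat.odd_iff.mp ha)
    rw [Odd.neg_one_pow ha, Odd.neg_one_pow hb]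

lemma lemD (hcl : ∀ ρ : Multiset V, e₀ ::ₘ ρ ∈ Δ → ρ ∈ Δ) (s : ℕ) (l : List V) :
    ∀ (μ : Multiset V), (∀ y ∈ l, e₀ < y) → e₀ ∉ μ →
      Multiset.card μ + l.length = s + 1 →
      coneMap R Δ e₀ s (auxB R Δ E s l μ) =
        ((-1 : R) ^ (pcnt e₀ μ + 1)) • auxB R Δ E (s + 1) l (e₀ ::ₘ μ) := by
  induction l with
  | nil => intro μ _ _ _; simp [auxB]
  | cons x L ih =>
    intro μ hgt hμ hcard
    simp only [auxB, map_add]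
    rw [cone_gen_apply R Δ e₀ hcl]
    have hne : e₀ ∉ μ + (↑L : Multiset V) := by
      simp only [Multiset.mem_add]
      rintro (h | h)
      · exact hμ h
      · exact lt_irrefl e₀ (hgt e₀ (List.mem_cons_of_mem x (Multiset.mem_coe.mp h)))
    rw [if_neg hne]
    have hpL : pcnt e₀ (μ + (↑L : Multiset V)) = pcnt e₀ μ := by
      rw [pcnt, Multiset.countP_add]
      have h0 : Multiset.countP (fun y => y < e₀) (↑L : Multiset V) = 0 := by
        rw [Multiset.countP_eq_zero]
        intro y hy
        exact not_lt.mpr (le_of_lt (hgt y (List.mem_cons_of_mem x (Multiset.mem_coe.mp hy))))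
      rw [h0]
      simp [pcnt]
    rw [ih (x ::ₘ μ)
      (fun y hy => hgt y (List.mem_cons_of_mem x hy))
      (fun h => lt_irrefl e₀ (by
        rcases Multiset.mem_cons.mp h with rfl | h'
        · exact hgt e₀ (List.mem_cons_self)
        · exact absurd h' hμ))
      (by simp only [Multiset.card_cons, List.length_cons] at hcard ⊢; omega)]
    have hswap : auxB R Δ E (s + 1) L (e₀ ::ₘ x ::ₘ μ) =
        auxB R Δ E (s + 1) L (x ::ₘ e₀ ::ₘ μ) := by rw [Multiset.cons_swap]
    have hpx : pcnt e₀ (x ::ₘ μ) = pcnt e₀ μ := by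
      rw [pcnt, Multiset.countP_cons, if_neg (not_lt.mpr (le_of_lt (hgt x (List.mem_cons_self)))), pcnt, add_zero]
    have hcle : L.countP (fun y => decide (s(x, y) ∉ E)) ≤ s := by
      have h1 := List.countP_le_length (p := fun y => decide (s(x, y) ∉ E)) (l := L)
      simp only [Multiset.card_cons, List.length_cons] at hcard
      omega
    rw [hswap, hpx, hpL, smul_add]
    congr 1
    rw [smul_smul, smul_gen, smul_gen, mul_one, Multiset.cons_add, ← pow_add, ← pow_add]
    exact congrArg _ (neg_one_pow_congr_mod2 R (by omega))

lemma lemC (hcl : ∀ ρ : Multiset V, e₀ ::ₘ ρ ∈ Δ → ρ ∈ Δ)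
    (hnc2 : ∀ y, s(y, e₀) ∉ E) (s : ℕ) (l : List V) :
    ∀ (μ : Multiset V), l.Pairwise (· ≤ ·) → e₀ ∉ l → e₀ ∉ μ →
      Multiset.card μ + l.length = s + 1 →
      coneMap R Δ e₀ s (auxB R Δ E s l μ) =
        ((-1 : R) ^ (pcnt e₀ μ + pcnt e₀ (↑l : Multiset V) + 1)) •
          auxC R Δ E e₀ (s + 1) l μ := by
  induction l with
  | nil => intro μ _ _ _ _; simp [auxB, auxC]
  | cons x L ih =>
    intro μ hsort hxl hμ hcard
    by_cases hx : e₀ ≤ x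
    · have hx' : e₀ < x :=
        lt_of_le_of_ne hx (fun h => hxl (by rw [h]; exact List.mem_cons_self))
      have hgt : ∀ y ∈ x :: L, e₀ < y := by
        intro y hy
        rcases List.mem_cons.mp hy with rfl | hy'
        · exact hx'
        · exact lt_of_lt_of_le hx' (List.rel_of_pairwise_cons hsort hy')
      have hpl : pcnt e₀ (↑(x :: L) : Multiset V) = 0 := by
        rw [pcnt, Multiset.countP_eq_zero]
        intro y hy
        exact not_lt.mpr (le_of_lt (hgt y (Multiset.mem_coe.mp hy)))
      rw [lemD R Δ E e₀ hcl s (x :: L) μ hgt hμ hcard, hpl]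
      simp only [auxC]
      rw [if_pos hx, add_zero]
    · have hx' : x < e₀ := not_le.mp hx
      have hxL : e₀ ∉ L := fun h => hxl (List.mem_cons_of_mem x h)
      have hxne : e₀ ∉ x ::ₘ μ := by
        rw [Multiset.mem_cons]
        rintro (rfl | h)
        · exact hxl (List.mem_cons_self)
        · exact hμ h
      simp only [auxB, map_add, auxC]
      rw [if_neg hx, cone_gen_apply R Δ e₀ hcl]
      have hne : e₀ ∉ μ + (↑L : Multiset V) := by
        simp only [Multiset.mem_add]
        rintro (h | h)
        · exact hμ h
        · exact hxL (Multiset.mem_coe.mp h)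
      rw [if_neg hne]
      rw [ih (x ::ₘ μ) (List.pairwise_cons.mp hsort).2 hxL hxne
        (by simp only [Multiset.card_cons, List.length_cons] at hcard ⊢; omega)]
      have hpadd : pcnt e₀ (μ + (↑L : Multiset V)) =
          pcnt e₀ μ + pcnt e₀ (↑L : Multiset V) := Multiset.countP_add _ _ _
      have hpx : pcnt e₀ (x ::ₘ μ) = pcnt e₀ μ + 1 := by
        rw [pcnt, Multiset.countP_cons, if_pos hx', pcnt]
      have hpl : pcnt e₀ (↑(x :: L) : Multiset V) = pcnt e₀ (↑L : Multiset V) + 1 := by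
        rw [← Multiset.cons_coe, pcnt, Multiset.countP_cons, if_pos hx', pcnt]
      rw [hpadd, hpx, hpl, smul_add]
      congr 1
      · rw [smul_smul, ← pow_add, smul_gen, mul_one, smul_gen, Multiset.cons_add,
          Nat.succ_sub_succ_eq_sub]
        congr 1
        rw [mul_comm, ← pow_add]
        apply neg_one_pow_congr_mod2
        omega
      · congr 1
        apply neg_one_pow_congr_mod2
        omega

lemma coneMap_auxB_zero (hcl : ∀ ρ : Multiset V, e₀ ::ₘ ρ ∈ Δ → ρ ∈ Δ) (s : ℕ)
    (l : List V) : ∀ (μ : Multiset V), e₀ ∈ μ →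
      coneMap R Δ e₀ s (auxB R Δ E s l μ) = 0 := by
  induction l with
  | nil => intro μ _; simp [auxB]
  | cons x L ih =>
    intro μ hμ
    simp only [auxB, map_add]
    rw [cone_gen_apply R Δ e₀ hcl,
      if_pos (Multiset.mem_add.mpr (Or.inl hμ)),
      ih (x ::ₘ μ) (Multiset.mem_cons_of_mem hμ), add_zero]

lemma coneMap_auxC_zero (hcl : ∀ ρ : Multiset V, e₀ ::ₘ ρ ∈ Δ → ρ ∈ Δ) (s : ℕ)
    (l : List V) : ∀ (μ : Multiset V),
      coneMap R Δ e₀ s (auxC R Δ E e₀ s l μ) = 0 := by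
  induction l with
  | nil => intro μ; simp [auxC]
  | cons x L ih =>
    intro μ
    simp only [auxC]
    split
    · exact coneMap_auxB_zero R Δ E e₀ hcl s (x :: L) (e₀ ::ₘ μ)
        (Multiset.mem_cons_self _ _)
    · rw [map_add, cone_gen_apply R Δ e₀ hcl,
        if_pos (Multiset.mem_add.mpr (Or.inl (Multiset.mem_cons_self _ _))),
        ih (x ::ₘ μ), add_zero]

lemma coneMap_support (s : ℕ) (x : multisetChains R Δ s) :
    ∀ τ ∈ (coneMap R Δ e₀ s x).support, e₀ ∈ τ.1 := by
  intro τ hτ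
  rw [coneMap, Finsupp.lsum_apply] at hτ
  obtain ⟨σ, hσ, hτ2⟩ := Finset.mem_biUnion.mp (Finsupp.support_sum hτ)
  rw [LinearMap.toSpanSingleton_apply] at hτ2
  have hτ3 := Finsupp.support_smul hτ2
  by_cases hm : e₀ ∈ σ.1
  · rw [if_pos hm] at hτ3
    simp at hτ3
  · rw [if_neg hm] at hτ3
    have hτ4 := Finsupp.support_smul hτ3
    unfold multisetGen at hτ4
    split at hτ4
    · have h5 := Finsupp.support_single_subset hτ4
      rw [Finset.mem_singleton] at h5
      rw [h5]
      exact Multiset.mem_cons_self _ _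
    · simp at hτ4

lemma bd_single (s : ℕ) (σp : {σ : Multiset V // σ ∈ Δ ∧ Multiset.card σ = s + 1}) :
    multisetBoundary R Δ E s (Finsupp.single σp 1) = boundaryGen R Δ E s σp := by
  simp [multisetBoundary, Finsupp.lsum_single, LinearMap.toSpanSingleton_apply]

lemma single_eq_gen (s : ℕ) (σ : Multiset V) (h : σ ∈ Δ ∧ Multiset.card σ = s) :
    (Finsupp.single ⟨σ, h⟩ 1 : multisetChains R Δ s) = multisetGen R Δ s σ 1 := by
  rw [multisetGen, dif_pos h]

end AuxSec

/-! ### Specific facts about `deltaFamily` and `commuteFamily` -/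

noncomputable section SpecSec

open scoped Classical

variable {r : ℕ} (lam : Fin r → ℕ) (ss : Fin r → Bool) (aq : Fin r)

lemma loop_not_commute (y : Sym2 (Fin r)) : s(s(aq, aq), y) ∉ commuteFamily r ss := by
  rintro ⟨e, f, heq, hde, hdf, -⟩
  rcases Sym2.eq_iff.mp heq with ⟨h1, -⟩ | ⟨h1, -⟩
  · exact hde (by rw [← h1]; exact Sym2.mk_isDiag_iff.mpr rfl)
  · exact hdf (by rw [← h1]; exact Sym2.mk_isDiag_iff.mpr rfl)

lemma loop_not_commute' (y : Sym2 (Fin r)) : s(y, s(aq, aq)) ∉ commuteFamily r ss := by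
  rw [Sym2.eq_swap]; exact loop_not_commute ss aq y

lemma deg_cons (e : Sym2 (Fin r)) (ρ : Multiset (Sym2 (Fin r))) (a : Fin r) :
    multidegree r (e ::ₘ ρ) a =
      (if e = s(a, a) then 2 else if a ∈ e then 1 else 0) + multidegree r ρ a := by
  unfold multidegree; rw [Multiset.map_cons, Multiset.sum_cons]

lemma deg_cons_loop_self (ρ : Multiset (Sym2 (Fin r))) :
    multidegree r (s(aq, aq) ::ₘ ρ) aq = multidegree r ρ aq + 2 := by
  rw [deg_cons, if_pos rfl, add_comm]

lemma deg_cons_loop_other (ρ : Multiset (Sym2 (Fin r))) (a : Fin r) (ha : a ≠ aq) :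
    multidegree r (s(aq, aq) ::ₘ ρ) a = multidegree r ρ a := by
  rw [deg_cons, if_neg, if_neg, zero_add]
  · rw [Sym2.mem_iff]
    rintro (rfl | rfl) <;> exact ha rfl
  · intro h
    rcases Sym2.eq_iff.mp h with ⟨h1, -⟩ | ⟨h1, -⟩ <;> exact ha h1.symm

lemma count_loop_le_one (hq : ss aq = true) (σ : Multiset (Sym2 (Fin r)))
    (hσ : σ ∈ deltaFamily r lam ss) : σ.count s(aq, aq) ≤ 1 := by
  by_contra h
  obtain ⟨a, b, hab, hne⟩ := hσ.2.2 s(aq, aq) (by omega)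
  rcases Sym2.eq_iff.mp hab with ⟨h1, h2⟩ | ⟨h1, h2⟩ <;>
    · subst h1; subst h2; exact hne rfl

lemma delta_of_cons_loop (hq : ss aq = true) (ρ : Multiset (Sym2 (Fin r)))
    (h : s(aq, aq) ::ₘ ρ ∈ deltaFamily r lam ss) : ρ ∈ deltaFamily r lam ss := by
  obtain ⟨h1, h2, h3⟩ := h
  refine ⟨fun a ha => ?_, fun a ha => ?_, fun e he => ?_⟩
  · by_cases haq : a = aq
    · subst haq
      have := h1 a ha
      rw [deg_cons_loop_self] at this
      omega
    · have := h1 a ha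
      rwa [deg_cons_loop_other _ _ _ haq] at this
  · have haq : a ≠ aq := fun hh => by rw [hh, hq] at ha; cases ha
    obtain ⟨hl, hu, hn⟩ := h2 a ha
    rw [deg_cons_loop_other _ _ _ haq] at hl hu
    exact ⟨hl, hu, fun hm => hn (Multiset.mem_cons_of_mem hm)⟩
  · refine h3 e ?_
    rw [Multiset.count_cons]
    omega

lemma delta_cons_loop (hq : ss aq = true) (ρ : Multiset (Sym2 (Fin r)))
    (hρ : ρ ∈ deltaFamily r lam ss) (hnl : s(aq, aq) ∉ ρ)
    (hdeg : multidegree r ρ aq + 2 ≤ lam aq) :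
    s(aq, aq) ::ₘ ρ ∈ deltaFamily r lam ss := by
  obtain ⟨h1, h2, h3⟩ := hρ
  refine ⟨fun a ha => ?_, fun a ha => ?_, fun e he => ?_⟩
  · by_cases haq : a = aq
    · subst haq
      rw [deg_cons_loop_self]
      omega
    · rw [deg_cons_loop_other _ _ _ haq]
      exact h1 a ha
  · have haq : a ≠ aq := fun hh => by rw [hh, hq] at ha; cases ha
    obtain ⟨hl, hu, hn⟩ := h2 a ha
    rw [deg_cons_loop_other _ _ _ haq]
    refine ⟨hl, hu, fun hm => ?_⟩
    rcases Multiset.mem_cons.mp hm with hh | hh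
    · rcases Sym2.eq_iff.mp hh with ⟨hx, -⟩ | ⟨hx, -⟩ <;> exact haq hx
    · exact hn hh
  · by_cases heq : e = s(aq, aq)
    · subst heq
      rw [Multiset.count_cons_self] at he
      have : Multiset.count s(aq, aq) ρ = 0 := Multiset.count_eq_zero.mpr hnl
      omega
    · rw [Multiset.count_cons_of_ne heq] at he
      exact h3 e he

variable (R : Type*) [CommRing R]

lemma keyLemma (hq : ss aq = true) (s : ℕ) (σ : Multiset (Sym2 (Fin r)))
    (h : σ ∈ deltaFamily r lam ss ∧ Multiset.card σ = s + 1)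
    (hb : s(aq, aq) ∈ σ ∨ multidegree r σ aq + 2 ≤ lam aq) :
    multisetBoundary R (deltaFamily r lam ss) (commuteFamily r ss) (s + 1)
        (coneMap R (deltaFamily r lam ss) s(aq, aq) (s + 1) (Finsupp.single ⟨σ, h⟩ 1)) +
      coneMap R (deltaFamily r lam ss) s(aq, aq) s
        (multisetBoundary R (deltaFamily r lam ss) (commuteFamily r ss) s
          (Finsupp.single ⟨σ, h⟩ 1)) =
      Finsupp.single ⟨σ, h⟩ 1 := by
  set Δ := deltaFamily r lam ss with hΔ
  set E := commuteFamily r ss with hE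
  set e₀ : Sym2 (Fin r) := s(aq, aq) with he₀
  have hcl : ∀ ρ : Multiset (Sym2 (Fin r)), e₀ ::ₘ ρ ∈ Δ → ρ ∈ Δ :=
    fun ρ hρ => delta_of_cons_loop lam ss aq hq ρ hρ
  have hnc1 : ∀ y, s(e₀, y) ∉ E := fun y => loop_not_commute ss aq y
  have hnc2 : ∀ y, s(y, e₀) ∉ E := fun y => loop_not_commute' ss aq y
  by_cases hm : e₀ ∈ σ
  · -- `σ` contains the loop
    rw [single_eq_gen, cone_gen_apply R Δ e₀ hcl, if_pos hm, map_zero, zero_add]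
    set ρ : Multiset (Sym2 (Fin r)) := σ.erase e₀ with hρdef
    have hσρ : σ = e₀ ::ₘ ρ := (Multiset.cons_erase hm).symm
    have hρΔ : ρ ∈ Δ := hcl ρ (hσρ ▸ h.1)
    have hcρ : Multiset.card ρ = s := by
      have := h.2
      rw [hσρ, Multiset.card_cons] at this
      omega
    have hnρ : e₀ ∉ ρ := by
      rw [← Multiset.count_eq_zero, hρdef, Multiset.count_erase_self]
      have hle := count_loop_le_one lam ss aq hq σ h.1
      rw [← he₀] at hle
      have hone : 1 ≤ Multiset.count e₀ σ := Multiset.one_le_count_iff_mem.mpr hm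
      omega
    rw [boundary_gen_apply, dif_pos h, one_smul, boundaryGen_eq_auxB]
    have hsort : σ.sort (@LE.le (Sym2 (Fin r)) (sym2LinearOrder r).toLE) = List.orderedInsert (@LE.le (Sym2 (Fin r)) (sym2LinearOrder r).toLE) e₀ (ρ.sort (@LE.le (Sym2 (Fin r)) (sym2LinearOrder r).toLE)) := by
      rw [hσρ, sort_cons_eq]
    rw [hsort, claimA R Δ E e₀ hnc1 hnc2 s (ρ.sort (@LE.le (Sym2 (Fin r)) (sym2LinearOrder r).toLE)) 0 (Multiset.pairwise_sort _ _)
      (by simp [Multiset.length_sort, hcρ])]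
    rw [map_add, map_smul, cone_gen_apply R Δ e₀ hcl, coneMap_auxC_zero R Δ E e₀ hcl,
      add_zero]
    rw [if_neg (by rw [zero_add, Multiset.sort_eq]; exact hnρ)]
    rw [one_smul, smul_smul, ← pow_add]
    have hzz : Multiset.card (0 : Multiset (Sym2 (Fin r))) = 0 := rfl
    rw [Multiset.sort_eq, zero_add]
    have hev : Even (pcnt e₀ ρ + pcnt e₀ ρ) := ⟨pcnt e₀ ρ, by omega⟩
    rw [hzz, zero_add, Even.neg_one_pow hev, one_smul, ← hσρ]
  · -- `σ` does not contain the loop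
    have hdeg : multidegree r σ aq + 2 ≤ lam aq := hb.resolve_left hm
    have hcone : e₀ ::ₘ σ ∈ Δ ∧ Multiset.card (e₀ ::ₘ σ) = s + 1 + 1 := by
      refine ⟨delta_cons_loop lam ss aq hq σ h.1 hm hdeg, ?_⟩
      rw [Multiset.card_cons, h.2]
    rw [single_eq_gen, cone_gen_apply R Δ e₀ hcl, if_neg hm, one_smul, map_smul,
      boundary_gen_apply, dif_pos hcone, one_smul, boundaryGen_eq_auxB]
    have hsort : (e₀ ::ₘ σ).sort (@LE.le (Sym2 (Fin r)) (sym2LinearOrder r).toLE) =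
        List.orderedInsert (@LE.le (Sym2 (Fin r)) (sym2LinearOrder r).toLE) e₀ (σ.sort (@LE.le (Sym2 (Fin r)) (sym2LinearOrder r).toLE)) := sort_cons_eq e₀ σ
    rw [hsort, claimA R Δ E e₀ hnc1 hnc2 (s + 1) (σ.sort (@LE.le (Sym2 (Fin r)) (sym2LinearOrder r).toLE)) 0
      (Multiset.pairwise_sort _ _) (by simp [Multiset.length_sort, h.2])]
    rw [boundary_gen_apply, dif_pos h, one_smul, boundaryGen_eq_auxB,
      lemC R Δ E e₀ hcl hnc2 s (σ.sort (@LE.le (Sym2 (Fin r)) (sym2LinearOrder r).toLE)) 0 (Multiset.pairwise_sort _ _)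
        (fun hc => hm ((Multiset.mem_sort _).mp hc)) (Multiset.notMem_zero e₀)
        (by simp [Multiset.length_sort, h.2])]
    have hzz : Multiset.card (0 : Multiset (Sym2 (Fin r))) = 0 := rfl
    have hp0 : pcnt e₀ (0 : Multiset (Sym2 (Fin r))) = 0 := rfl
    simp only [Multiset.sort_eq, hzz, hp0, zero_add]
    rw [smul_add, smul_smul, ← pow_add]
    have hev : Even (pcnt e₀ σ + pcnt e₀ σ) := ⟨pcnt e₀ σ, by omega⟩
    rw [Even.neg_one_pow hev, one_smul]
    rw [add_assoc, ← add_smul]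
    have hcanc : ((-1 : R) ^ pcnt e₀ σ + (-1 : R) ^ (pcnt e₀ σ + 1)) = 0 := by
      rw [pow_succ]
      ring
    rw [hcanc, zero_smul, add_zero]

lemma keyLemma0 (hq : ss aq = true) (σ : Multiset (Sym2 (Fin r)))
    (h : σ ∈ deltaFamily r lam ss ∧ Multiset.card σ = 0)
    (hb : s(aq, aq) ∈ σ ∨ multidegree r σ aq + 2 ≤ lam aq) :
    multisetBoundary R (deltaFamily r lam ss) (commuteFamily r ss) 0
        (coneMap R (deltaFamily r lam ss) s(aq, aq) 0 (Finsupp.single ⟨σ, h⟩ 1)) =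
      Finsupp.single ⟨σ, h⟩ 1 := by
  set Δ := deltaFamily r lam ss with hΔ
  set E := commuteFamily r ss with hE
  set e₀ : Sym2 (Fin r) := s(aq, aq) with he₀
  have hcl : ∀ ρ : Multiset (Sym2 (Fin r)), e₀ ::ₘ ρ ∈ Δ → ρ ∈ Δ :=
    fun ρ hρ => delta_of_cons_loop lam ss aq hq ρ hρ
  have hnc1 : ∀ y, s(e₀, y) ∉ E := fun y => loop_not_commute ss aq y
  have hnc2 : ∀ y, s(y, e₀) ∉ E := fun y => loop_not_commute' ss aq y
  have hσ0 : σ = 0 := Multiset.card_eq_zero.mp h.2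
  have hm : e₀ ∉ σ := by rw [hσ0]; exact Multiset.notMem_zero e₀
  have hdeg : multidegree r σ aq + 2 ≤ lam aq := hb.resolve_left hm
  have hcone : e₀ ::ₘ σ ∈ Δ ∧ Multiset.card (e₀ ::ₘ σ) = 0 + 1 := by
    refine ⟨delta_cons_loop lam ss aq hq σ h.1 hm hdeg, ?_⟩
    rw [Multiset.card_cons, h.2]
  rw [single_eq_gen, cone_gen_apply R Δ e₀ hcl, if_neg hm, one_smul, map_smul,
    boundary_gen_apply, dif_pos hcone, one_smul, boundaryGen_eq_auxB]
  have hsort : (e₀ ::ₘ σ).sort (@LE.le (Sym2 (Fin r)) (sym2LinearOrder r).toLE) =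
      List.orderedInsert (@LE.le (Sym2 (Fin r)) (sym2LinearOrder r).toLE) e₀ (σ.sort (@LE.le (Sym2 (Fin r)) (sym2LinearOrder r).toLE)) := sort_cons_eq e₀ σ
  rw [hsort, claimA R Δ E e₀ hnc1 hnc2 0 (σ.sort (@LE.le (Sym2 (Fin r)) (sym2LinearOrder r).toLE)) 0
    (Multiset.pairwise_sort _ _) (by simp [Multiset.length_sort, h.2])]
  have hzz : Multiset.card (0 : Multiset (Sym2 (Fin r))) = 0 := rfl
  have hp0 : pcnt e₀ (0 : Multiset (Sym2 (Fin r))) = 0 := rfl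
  have hpσ : pcnt e₀ σ = 0 := by rw [hσ0]; rfl
  have hauxC : auxC R Δ E e₀ 0 (σ.sort (@LE.le (Sym2 (Fin r)) (sym2LinearOrder r).toLE)) 0 = 0 := by
    rw [hσ0, Multiset.sort_zero]
    rfl
  rw [Multiset.sort_eq, zero_add, hzz, zero_add, hpσ, pow_zero, one_smul, hauxC,
    add_zero, one_smul]

end SpecSec
/-- Inside the chain complex `C((Δ_{λ,s}, E_{λ,s}); R)`, where the vertex `a_q`
is positively charged, let `W` be the subcomplex spanned by the generators `σ`
in which `a_q` fails condition (I), i.e. the loop `a_qa_q` appears in `σ` or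
`deg_σ(a_q) ≤ λ_{a_q} - 2`.  Then `W` has vanishing homology: every cycle
supported on such generators is the boundary of a chain supported on such
generators (in the paper's notation, a cycle `c = a_qa_q ⊗ c' + c''` satisfies
`∂c' = 0` and `c' = -∂c''`, whence `c = ∂(a_qa_q ⊗ c'')`). -/
theorem stmt_12 (r : ℕ) (R : Type*) [CommRing R] (lam : Fin r → ℕ)
    (hlam : ∀ a, 0 < lam a) (ss : Fin r → Bool) (aq : Fin r) (hq : ss aq = true) :
    ∀ bad : Multiset (Sym2 (Fin r)) → Prop,
      (∀ σ, bad σ ↔ (s(aq, aq) ∈ σ ∨ multidegree r σ aq + 2 ≤ lam aq)) →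
      -- every cycle in `W` is a boundary in `W` ...
      (∀ (s : ℕ) (c : multisetChains R (deltaFamily r lam ss) (s + 1)),
        (∀ σ ∈ c.support, bad σ.1) →
        multisetBoundary R (deltaFamily r lam ss) (commuteFamily r ss) s c = 0 →
        ∃ b : multisetChains R (deltaFamily r lam ss) (s + 2),
          (∀ σ ∈ b.support, bad σ.1) ∧
          multisetBoundary R (deltaFamily r lam ss) (commuteFamily r ss) (s + 1) b = c) ∧
      -- ... including in the bottom degree, where every chain is a cycle:
      (∀ c : multisetChains R (deltaFamily r lam ss) 0,
        (∀ σ ∈ c.support, bad σ.1) →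
        ∃ b : multisetChains R (deltaFamily r lam ss) 1,
          (∀ σ ∈ b.support, bad σ.1) ∧
          multisetBoundary R (deltaFamily r lam ss) (commuteFamily r ss) 0 b = c) := by
  intro bad hbad
  constructor
  · -- positive degrees
    intro s c hsupp hcyc
    refine ⟨coneMap R (deltaFamily r lam ss) s(aq, aq) (s + 1) c, ?_, ?_⟩
    · intro τ hτ
      exact (hbad τ.1).mpr (Or.inl
        (coneMap_support R (deltaFamily r lam ss) s(aq, aq) (s + 1) c τ hτ))
    · have hM : ∀ x : multisetChains R (deltaFamily r lam ss) (s + 1),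
          (∀ σ ∈ x.support, bad σ.1) →
          multisetBoundary R (deltaFamily r lam ss) (commuteFamily r ss) (s + 1)
              (coneMap R (deltaFamily r lam ss) s(aq, aq) (s + 1) x) +
            coneMap R (deltaFamily r lam ss) s(aq, aq) s
              (multisetBoundary R (deltaFamily r lam ss) (commuteFamily r ss) s x) = x := by
        intro x hx
        have hkey : ∀ σp ∈ x.support, ∀ a : R,
            multisetBoundary R (deltaFamily r lam ss) (commuteFamily r ss) (s + 1)
                (coneMap R (deltaFamily r lam ss) s(aq, aq) (s + 1)
                  (Finsupp.single σp a)) +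
              coneMap R (deltaFamily r lam ss) s(aq, aq) s
                (multisetBoundary R (deltaFamily r lam ss) (commuteFamily r ss) s
                  (Finsupp.single σp a)) =
              Finsupp.single σp a := by
          intro σp hσp a
          have h1 := keyLemma lam ss aq R hq s σp.1 σp.2 ((hbad σp.1).mp (hx σp hσp))
          have h2 : Finsupp.single σp (a : R) = a • Finsupp.single σp (1 : R) := by
            rw [Finsupp.smul_single, smul_eq_mul, mul_one]
          rw [h2, map_smul, map_smul, map_smul, map_smul, ← smul_add]
          rw [show (⟨σp.1, σp.2⟩ : {σ : Multiset (Sym2 (Fin r)) //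
            σ ∈ deltaFamily r lam ss ∧ Multiset.card σ = s + 1}) = σp from rfl] at h1
          rw [h1]
        conv_lhs => rw [← Finsupp.sum_single x]
        rw [map_finsuppSum, map_finsuppSum, map_finsuppSum, map_finsuppSum,
          ← Finsupp.sum_add]
        refine Eq.trans (Finsupp.sum_congr ?_) (Finsupp.sum_single x)
        intro σp hσp
        exact hkey σp hσp (x σp)
      have hfin := hM c hsupp
      rw [hcyc, map_zero, add_zero] at hfin
      exact hfin
  · -- bottom degree
    intro c hsupp
    refine ⟨coneMap R (deltaFamily r lam ss) s(aq, aq) 0 c, ?_, ?_⟩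
    · intro τ hτ
      exact (hbad τ.1).mpr (Or.inl
        (coneMap_support R (deltaFamily r lam ss) s(aq, aq) 0 c τ hτ))
    · conv_lhs => rw [← Finsupp.sum_single c]
      rw [map_finsuppSum, map_finsuppSum]
      refine Eq.trans (Finsupp.sum_congr ?_) (Finsupp.sum_single c)
      intro σp hσp
      have h1 := keyLemma0 lam ss aq R hq σp.1 σp.2 ((hbad σp.1).mp (hsupp σp hσp))
      have h2 : Finsupp.single σp (c σp) = (c σp) • Finsupp.single σp (1 : R) := by
        rw [Finsupp.smul_single, smul_eq_mul, mul_one]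
      rw [h2, map_smul, map_smul]
      rw [show (⟨σp.1, σp.2⟩ : {σ : Multiset (Sym2 (Fin r)) //
        σ ∈ deltaFamily r lam ss ∧ Multiset.card σ = 0}) = σp from rfl] at h1
      rw [h1]
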